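/- The polynomial ring $\mathbb{F}_p[x]$ in one variable over the prime field with $p$ elements is finitely separable: for every polynomial $f \in \mathbb{F}_p[x]$ and every subring $A \subseteq \mathbb{F}_p[x]$ with $f \notin A$, there exists a finite ring $F$ and a ring homomorphism $\varphi : \mathbb{F}_p[x] \to F$ such that $\varphi(f) \notin \varphi(A)$. -/

import Mathlib

/-- A (not necessarily unital) ring `K` is finitely separable if every element `a`
lying outside a subring `A` can be separated from `A` by a homomorphism to a finite ring. -/
def IsFinSep (K : Type) [NonUnitalRing K] : Prop :=
  ∀ (a : K) (A : NonUnitalSubring K), a ∉ A →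
    ∃ (F : Type) (_ : NonUnitalRing F) (_ : Finite F),
      ∃ φ : K →ₙ+* F, φ a ∉ ⇑φ '' (A : Set K)

/-- `ppow a n = a ^ (n + 1)`, the positive powers of `a` in a non-unital ring. -/
def ppow {K : Type} [NonUnitalRing K] (a : K) : ℕ → K
  | 0 => a
  | n + 1 => ppow a n * a

/-- Evaluation of an integer polynomial (whose constant term is ignored, hence
meaningful for polynomials with zero constant term) at an element of a non-unital ring. -/
def evalnc {K : Type} [NonUnitalRing K] (p : Polynomial ℤ) (a : K) : K :=
  ∑ i ∈ Finset.range p.natDegree, p.coeff (i + 1) • ppow a i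

set_option maxHeartbeats 800000 in
/-- Auxiliary double-Krull-intersection argument: over a Noetherian domain `R` (with a
nonzero nonunit `c`), an element of a finitely generated module that is divisible by every
nonzero ring element must be zero. -/
theorem krull_aux {R M : Type} [CommRing R] [IsDomain R] [AddCommGroup M] [Module R M]
    [IsNoetherianRing R] [Module.Finite R M] (x : M) (c : R) (hc0 : c ≠ 0) (hcu : ¬ IsUnit c)
    (H : ∀ g : R, g ≠ 0 → ∃ y : M, x = g • y) : x = 0 := by
  have Hi : ∀ g : R, g ≠ 0 → x ∈ (⨅ i : ℕ, (Ideal.span {g}) ^ i • (⊤ : Submodule R M)) := by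
    intro g hg
    rw [Submodule.mem_iInf]
    intro i
    obtain ⟨y, hy⟩ := H (g ^ i) (pow_ne_zero _ hg)
    rw [hy]
    exact Submodule.smul_mem_smul (Ideal.pow_mem_pow (Ideal.mem_span_singleton_self g) i) Submodule.mem_top
  obtain ⟨r, hr⟩ := ((Ideal.span {c}).mem_iInf_smul_pow_eq_bot_iff x).mp (Hi c hc0)
  set e : R := 1 - r.1 with he
  have heq0 : e • x = 0 := by rw [he, sub_smul, one_smul, hr, sub_self]
  have hene : e ≠ 0 := by
    intro h
    have hr1 : (r : R) = 1 := by
      have := sub_eq_zero.mp (he ▸ h)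
      exact this.symm
    obtain ⟨s, hs⟩ := Ideal.mem_span_singleton.mp (hr1 ▸ r.2)
    exact hcu (IsUnit.of_mul_eq_one (a := c) s hs.symm)
  obtain ⟨r2, hr2⟩ := ((Ideal.span {e}).mem_iInf_smul_pow_eq_bot_iff x).mp (Hi e hene)
  obtain ⟨s2, hs2⟩ := Ideal.mem_span_singleton.mp r2.2
  calc x = (r2 : R) • x := hr2.symm
    _ = (s2 * e) • x := by rw [hs2, mul_comm]
    _ = s2 • (e • x) := mul_smul _ _ _
    _ = 0 := by rw [heq0, smul_zero]

set_option maxHeartbeats 1600000 in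
set_option synthInstance.maxHeartbeats 1000000 in
open Polynomial in
/-- The polynomial ring in one variable over the prime field with `p` elements is
finitely separable. -/
theorem stmt16 (p : ℕ) (hp : p.Prime) : IsFinSep (Polynomial (ZMod p)) := by
  haveI : Fact p.Prime := ⟨hp⟩
  intro a A ha
  suffices Hsep : ∃ g : Polynomial (ZMod p), g ≠ 0 ∧ ∀ b ∈ A, ¬ g ∣ (a - b) by
    obtain ⟨g, hg0, hgood⟩ := Hsep
    haveI : Module.Finite (ZMod p) (AdjoinRoot g) :=
      Module.Finite.of_basis (AdjoinRoot.powerBasis hg0).basis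
    refine ⟨AdjoinRoot g, inferInstance, Module.finite_of_finite (ZMod p),
      (AdjoinRoot.mk g).toNonUnitalRingHom, ?_⟩
    rintro ⟨b, hbA, heq⟩
    have h1 : (AdjoinRoot.mk g) b = (AdjoinRoot.mk g) a := heq
    have hdvd : g ∣ b - a := AdjoinRoot.mk_eq_mk.mp h1
    exact hgood b hbA (dvd_sub_comm.mp hdvd)
  by_cases hconst : ∀ b ∈ A, (b : Polynomial (ZMod p)).natDegree = 0
  · refine ⟨X ^ (a.natDegree + 1), pow_ne_zero _ X_ne_zero, fun b hb hdvd => ?_⟩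
    have hab : a - b ≠ 0 := sub_ne_zero.mpr (fun h => ha (h ▸ hb))
    have h1 := Polynomial.natDegree_le_of_dvd hdvd hab
    rw [natDegree_X_pow] at h1
    have h2 : (a - b).natDegree ≤ max a.natDegree b.natDegree := natDegree_sub_le a b
    rw [hconst b hb] at h2
    simp only [Nat.max_zero] at h2
    omega
  · push_neg at hconst
    obtain ⟨c, hcA, hcdeg⟩ := hconst
    by_contra hno
    push_neg at hno
    -- hno : ∀ g, g ≠ 0 → ∃ b ∈ A, g ∣ a - b
    have hc0 : c ≠ 0 := fun h => hcdeg (by simp [h])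
    have powmem : ∀ n : ℕ, c ^ (n + 1) ∈ A := by
      intro n
      induction n with
      | zero => simpa using hcA
      | succ m ih => rw [pow_succ]; exact A.mul_mem ih hcA
    have smulmem : ∀ (α : ZMod p) (y : Polynomial (ZMod p)), y ∈ A → α • y ∈ A := by
      intro α y hy
      have : y ∈ AddSubgroup.toZModSubmodule p A.toAddSubgroup := hy
      exact (AddSubgroup.toZModSubmodule p A.toAddSubgroup).smul_mem α this
    have aev : ∀ q : Polynomial (ZMod p), ∀ b ∈ A, (Polynomial.aeval c q) * b ∈ A := by
      intro q
      induction q using Polynomial.induction_on' with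
      | add f g hf hg =>
        intro b hb
        rw [map_add, add_mul]
        exact A.add_mem (hf b hb) (hg b hb)
      | monomial n α =>
        intro b hb
        rw [Polynomial.aeval_monomial, mul_assoc]
        have hcb : c ^ n * b ∈ A := by
          cases n with
          | zero => simpa using hb
          | succ m => exact A.mul_mem (powmem m) hb
        have hsm : (algebraMap (ZMod p) (Polynomial (ZMod p)) α) * (c ^ n * b)
            = α • (c ^ n * b) := (Algebra.smul_def _ _).symm
        rw [hsm]
        exact smulmem α _ hcb
    obtain ⟨R₀, hcR, mulmem, hfg⟩ :
        ∃ S : Subalgebra (ZMod p) (Polynomial (ZMod p)),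
          c ∈ S ∧ (∀ r ∈ S, ∀ b ∈ A, r * b ∈ A) ∧ S.FG := by
      refine ⟨Algebra.adjoin (ZMod p) {c}, Algebra.subset_adjoin rfl, ?_, ⟨{c}, by simp⟩⟩
      intro r hr b hb
      rw [Algebra.adjoin_singleton_eq_range_aeval] at hr
      obtain ⟨q, hq⟩ := hr
      exact hq ▸ aev q b hb
    let A' : Submodule R₀ (Polynomial (ZMod p)) :=
      { carrier := A
        add_mem' := fun h1 h2 => A.add_mem h1 h2
        zero_mem' := A.zero_mem
        smul_mem' := fun r b hb => by
          have : r • b = (r : Polynomial (ZMod p)) * b := Algebra.smul_def _ _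
          exact this ▸ mulmem r.1 r.2 b hb }
    haveI noeth : IsNoetherianRing R₀ := by
      haveI : Algebra.FiniteType (ZMod p) R₀ := (Subalgebra.fg_iff_finiteType R₀).mp hfg
      exact Algebra.FiniteType.isNoetherianRing (ZMod p) R₀
    haveI : Nontrivial R₀ :=
      ⟨⟨0, 1, fun h => one_ne_zero (α := Polynomial (ZMod p)) (congrArg Subtype.val h).symm⟩⟩
    haveI : IsDomain R₀ := Function.Injective.isDomain (Subalgebra.val R₀).toRingHom
      Subtype.val_injective
    set u := c.leadingCoeff⁻¹ with hu'
    have hu : u ≠ 0 := inv_ne_zero (leadingCoeff_ne_zero.mpr hc0)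
    set q0 := c * Polynomial.C u with hq0
    have hq0monic : q0.Monic := monic_mul_leadingCoeff_inv hc0
    have hq0deg : 0 < q0.degree := by
      rw [hq0, degree_mul_C hu]
      exact natDegree_pos_iff_degree_pos.mp (Nat.pos_of_ne_zero hcdeg)
    have hCuR : Polynomial.C u ∈ R₀ := by
      have hCu : Polynomial.C u = algebraMap (ZMod p) (Polynomial (ZMod p)) u := rfl
      exact hCu ▸ R₀.algebraMap_mem u
    have hq0R : q0 ∈ R₀ := R₀.mul_mem hcR hCuR
    have hXint : IsIntegral R₀ (Polynomial.X : Polynomial (ZMod p)) := by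
      refine ⟨q0.map (algebraMap (ZMod p) R₀) + Polynomial.C (-⟨q0, hq0R⟩ : R₀), ?_, ?_⟩
      · refine Polynomial.Monic.add_of_left (hq0monic.map _) ?_
        rw [hq0monic.degree_map]
        exact lt_of_le_of_lt (degree_C_le) hq0deg
      · have heval : (Polynomial.aeval (Polynomial.X : Polynomial (ZMod p)))
            (q0.map (algebraMap (ZMod p) R₀) + Polynomial.C (-⟨q0, hq0R⟩ : R₀)) = 0 := by
          rw [map_add, Polynomial.aeval_map_algebraMap, Polynomial.aeval_X_left_apply,
            Polynomial.aeval_C]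
          have hval : algebraMap R₀ (Polynomial (ZMod p)) (-⟨q0, hq0R⟩ : R₀) = -q0 := rfl
          rw [hval, add_neg_cancel]
        rw [Polynomial.aeval_def] at heval
        exact heval
    have htop : Algebra.adjoin R₀ {(Polynomial.X : Polynomial (ZMod p))} = ⊤ := by
      rw [eq_top_iff]
      rintro f -
      rw [Algebra.adjoin_singleton_eq_range_aeval]
      refine ⟨f.map (algebraMap (ZMod p) R₀), ?_⟩
      show (Polynomial.aeval (Polynomial.X : Polynomial (ZMod p)))
        (f.map (algebraMap (ZMod p) R₀)) = f
      rw [Polynomial.aeval_map_algebraMap, Polynomial.aeval_X_left_apply]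
    haveI hfinK : Module.Finite R₀ (Polynomial (ZMod p)) := by
      have h := hXint.fg_adjoin_singleton
      rw [htop, Algebra.top_toSubmodule] at h
      exact ⟨h⟩
    haveI : Module.Finite R₀ (Polynomial (ZMod p) ⧸ A') :=
      Module.Finite.of_surjective A'.mkQ (Submodule.mkQ_surjective A')
    have hqq : A'.mkQ a ≠ 0 := fun h => ha ((Submodule.Quotient.mk_eq_zero A').mp h)
    have hcel : (⟨c, hcR⟩ : R₀) ≠ 0 := fun h => hc0 (congrArg Subtype.val h)
    have hcu : ¬ IsUnit (⟨c, hcR⟩ : R₀) := by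
      intro hunit
      obtain ⟨v, hv⟩ := hunit.exists_right_inv
      have hK : c * (v : Polynomial (ZMod p)) = 1 := congrArg Subtype.val hv
      obtain ⟨w, hw, hwc⟩ := Polynomial.isUnit_iff.mp (IsUnit.of_mul_eq_one (a := c) _ hK)
      exact hcdeg (by rw [← hwc]; simp)
    have H : ∀ g : R₀, g ≠ 0 → ∃ y : Polynomial (ZMod p) ⧸ A', A'.mkQ a = g • y := by
      intro g hg
      have hgK : (g : Polynomial (ZMod p)) ≠ 0 := fun h => hg (Subtype.ext h)
      obtain ⟨b, hbA, hdvd⟩ := hno _ hgK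
      obtain ⟨h, hh⟩ := hdvd
      refine ⟨A'.mkQ h, ?_⟩
      have hb0 : A'.mkQ b = 0 := (Submodule.Quotient.mk_eq_zero A').mpr hbA
      have ha' : a = b + g • h := by
        have hgs : g • h = (g : Polynomial (ZMod p)) * h := Algebra.smul_def _ _
        rw [hgs, ← hh]
        ring
      rw [ha', map_add, hb0, zero_add, map_smul]
    have hz := krull_aux (A'.mkQ a) (⟨c, hcR⟩ : R₀) hcel hcu H
    exact hqq hz
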